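/- Online projected gradient descent regret bound (Zinkevich): Let D be a closed convex set of diameter at most D_bound (‖ω - ω'‖₂ ≤ D_bound for all ω, ω' ∈ D), and let r¹,…,r^T be differentiable convex functions on D with ‖∇rᵗ(ω)‖₂ ≤ G for all t, ω ∈ D. With step size η = D_bound/(G√T) and updates ω^{t+1} = Π_D(ωᵗ - η∇rᵗ(ωᵗ)) (Euclidean projection), the regret satisfies Σ_{t=1}^T rᵗ(ωᵗ) - min_{ω∈D} Σ_{t=1}^T rᵗ(ω) ≤ G·D_bound·√T. -/

import Mathlib

open RealInnerProductSpace

/-- Subgradient inequality for a differentiable convex function. -/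
lemma subgrad_ineq {d : ℕ} {f : EuclideanSpace ℝ (Fin d) → ℝ}
    (hdiff : Differentiable ℝ f) (hconv : ConvexOn ℝ Set.univ f)
    (x y : EuclideanSpace ℝ (Fin d)) :
    f x - f y ≤ ⟪gradient f x, x - y⟫ := by
  have hgrad : HasFDerivAt f ((InnerProductSpace.toDual ℝ _) (gradient f x)) x :=
    hasGradientAt_iff_hasFDerivAt.mp (hdiff x).hasGradientAt
  set φ : ℝ → ℝ := fun s => f (x + s • (y - x)) with hφ
  have hline : ∀ s : ℝ, HasDerivAt (fun s : ℝ => x + s • (y - x)) (y - x) s := by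
    intro s
    simpa using ((hasDerivAt_id s).smul_const (y - x)).const_add x
  have hder : HasDerivAt φ (⟪gradient f x, y - x⟫) 0 := by
    have := (by simpa using hgrad : HasFDerivAt f
        ((InnerProductSpace.toDual ℝ _) (gradient f x)) (x + (0:ℝ) • (y - x)))
    exact this.comp_hasDerivAt 0 (hline 0)
  have hφconv : ConvexOn ℝ Set.univ φ := by
    have : ConvexOn ℝ ((fun s : ℝ => x + s • (y - x)) ⁻¹' Set.univ)
        (f ∘ (AffineMap.lineMap x y : ℝ →ᵃ[ℝ] _)) := by
      have := hconv.comp_affineMap (AffineMap.lineMap x y : ℝ →ᵃ[ℝ] _)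
      simpa using this
    have heq : (f ∘ (AffineMap.lineMap x y : ℝ →ᵃ[ℝ] _)) = φ := by
      funext s
      simp [hφ, AffineMap.lineMap_apply, add_comm]
    simpa [heq] using this
  have hslope : ⟪gradient f x, y - x⟫ ≤ slope φ 0 1 :=
    hφconv.le_slope_of_hasDerivAt (Set.mem_univ 0) (Set.mem_univ 1) one_pos hder
  have e1 : x + (1:ℝ) • (y - x) = y := by rw [one_smul]; abel
  have e0 : x + (0:ℝ) • (y - x) = x := by rw [zero_smul]; abel
  have h01 : slope φ 0 1 = f y - f x := by
    simp [hφ, slope_def_field, e1, e0]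
  have hxy : ⟪gradient f x, x - y⟫ = -⟪gradient f x, y - x⟫ := by
    rw [← inner_neg_right]; congr 1; abel
  rw [h01] at hslope
  rw [hxy]
  linarith

/-- Projection onto a convex set is "firmly" closer to any point of the set. -/
lemma proj_nonexp {d : ℕ} {D : Set (EuclideanSpace ℝ (Fin d))} (hDconv : Convex ℝ D)
    {v p w : EuclideanSpace ℝ (Fin d)} (hp : p ∈ D)
    (hmin : ∀ u ∈ D, ‖p - v‖ ≤ ‖u - v‖) (hw : w ∈ D) :
    ‖p - w‖ ≤ ‖v - w‖ := by
  have : Nonempty D := ⟨⟨p, hp⟩⟩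
  have hinf : ‖v - p‖ = ⨅ u : D, ‖v - u‖ := by
    apply le_antisymm
    · exact le_ciInf fun u => by
        simpa [norm_sub_rev] using hmin u u.2
    · exact ciInf_le ⟨0, fun x ⟨u, hu⟩ => hu ▸ norm_nonneg _⟩ (⟨p, hp⟩ : D)
  have hchar := (norm_eq_iInf_iff_real_inner_le_zero hDconv hp).mp hinf
  have h1 : ⟪v - p, w - p⟫ ≤ 0 := hchar w hw
  have hexp : ‖v - w‖^2 = ‖v - p‖^2 + 2 * ⟪v - p, p - w⟫ + ‖p - w‖^2 := by
    have : v - w = (v - p) + (p - w) := by abel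
    rw [this, norm_add_sq_real]
  have h2 : ⟪v - p, p - w⟫ = - ⟪v - p, w - p⟫ := by
    rw [← inner_neg_right]; congr 1; abel
  nlinarith [norm_nonneg (p - w), norm_nonneg (v - w), norm_nonneg (v - p),
    sq_nonneg (‖v - p‖)]

/-- Online projected gradient descent regret bound (Zinkevich): with step size
`η = D/(G√T)`, the regret of projected gradient descent against convex differentiable
losses with gradients bounded by `G` on a convex closed domain of diameter `D`
is at most `G·D·√T`. -/
theorem projected_gradient_descent_regret {d : ℕ} (T : ℕ) (hT : 0 < T)
    (D : Set (EuclideanSpace ℝ (Fin d)))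
    (hDconv : Convex ℝ D) (hDclosed : IsClosed D)
    (Db G : ℝ) (hG : 0 < G) (hDb : 0 < Db)
    (hdiam : ∀ ω ∈ D, ∀ ω' ∈ D, ‖ω - ω'‖ ≤ Db)
    (r : Fin T → EuclideanSpace ℝ (Fin d) → ℝ)
    (hdiff : ∀ t, Differentiable ℝ (r t))
    (hconv : ∀ t, ConvexOn ℝ Set.univ (r t))
    (hgrad : ∀ t, ∀ ω ∈ D, ‖gradient (r t) ω‖ ≤ G)
    (proj : EuclideanSpace ℝ (Fin d) → EuclideanSpace ℝ (Fin d))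
    (hproj : ∀ v, proj v ∈ D ∧ ∀ u ∈ D, ‖proj v - v‖ ≤ ‖u - v‖)
    (η : ℝ) (hη : η = Db / (G * Real.sqrt T))
    (ω : ℕ → EuclideanSpace ℝ (Fin d)) (hω0 : ω 0 ∈ D)
    (hrec : ∀ t : Fin T, ω (t.1 + 1) = proj (ω t.1 - η • gradient (r t) (ω t.1))) :
    ∀ w ∈ D, ∑ t : Fin T, (r t (ω t.1) - r t w) ≤ G * Db * Real.sqrt T := by
  intro w hw
  have hT' : (0:ℝ) < T := by exact_mod_cast hT
  have hs0 : 0 < Real.sqrt T := Real.sqrt_pos.mpr hT'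
  have hs : Real.sqrt T * Real.sqrt T = T := Real.mul_self_sqrt (Nat.cast_nonneg T)
  have hηpos : 0 < η := by rw [hη]; positivity
  have hmem : ∀ t : ℕ, t ≤ T → ω t ∈ D := by
    intro t
    induction t with
    | zero => intro _; exact hω0
    | succ n _ =>
      intro h
      rw [hrec ⟨n, Nat.lt_of_succ_le h⟩]
      exact (hproj _).1
  set a : ℕ → ℝ := fun t => ‖ω t - w‖^2 with ha
  have step : ∀ t : Fin T, 2*η*(r t (ω t.1) - r t w) ≤
      (a t.1 - a (t.1+1)) + η^2 * G^2 := by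
    intro t
    set g := gradient (r t) (ω t.1) with hg
    have h1 : r t (ω t.1) - r t w ≤ ⟪ω t.1 - w, g⟫ := by
      rw [real_inner_comm]
      exact subgrad_ineq (hdiff t) (hconv t) _ _
    have hGt : ‖g‖ ≤ G := hgrad t _ (hmem t.1 t.2.le)
    have hG2 : ‖g‖^2 ≤ G^2 := by nlinarith [norm_nonneg g]
    set v := ω t.1 - η • g with hv
    have h2 : ‖ω (t.1+1) - w‖ ≤ ‖v - w‖ := by
      rw [hrec t]
      exact proj_nonexp hDconv (hproj v).1 (hproj v).2 hw
    have hsq : a (t.1+1) ≤ ‖v - w‖^2 := by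
      simp only [ha]
      nlinarith [norm_nonneg (ω (t.1+1) - w), norm_nonneg (v - w)]
    have hexp : ‖v - w‖^2 = a t.1 - 2*η*⟪ω t.1 - w, g⟫ + η^2 * ‖g‖^2 := by
      have hvw : v - w = (ω t.1 - w) - η • g := by rw [hv]; abel
      rw [hvw, norm_sub_sq_real, inner_smul_right, norm_smul, Real.norm_eq_abs,
        mul_pow, sq_abs]
      simp only [ha]; ring
    nlinarith [mul_le_mul_of_nonneg_left h1 (by positivity : (0:ℝ) ≤ 2*η),
      sq_nonneg η]
  have hsum : 2*η*(∑ t : Fin T, (r t (ω t.1) - r t w)) ≤ (a 0 - a T) + T * (η^2 * G^2) := by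
    rw [Finset.mul_sum]
    calc ∑ t : Fin T, 2*η*(r t (ω t.1) - r t w)
        ≤ ∑ t : Fin T, ((a t.1 - a (t.1+1)) + η^2 * G^2) :=
          Finset.sum_le_sum (fun t _ => step t)
      _ = (∑ t : Fin T, (a t.1 - a (t.1+1))) + T * (η^2 * G^2) := by
          rw [Finset.sum_add_distrib, Finset.sum_const, Finset.card_univ]
          simp [nsmul_eq_mul]
      _ = (a 0 - a T) + T * (η^2 * G^2) := by
          congr 1
          rw [Fin.sum_univ_eq_sum_range (fun i => a i - a (i+1))]
          exact Finset.sum_range_sub' a T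
  have haT : 0 ≤ a T := sq_nonneg _
  have ha0 : a 0 ≤ Db^2 := by
    have := hdiam _ hω0 _ hw
    simp only [ha]
    nlinarith [norm_nonneg (ω 0 - w)]
  have key : Db^2 + (T:ℝ) * (η^2 * G^2) = 2*η*(G*Db*Real.sqrt T) := by
    rw [hη]
    field_simp
    linear_combination (-1 : ℝ) * hs
  have hfin : 2*η*(∑ t : Fin T, (r t (ω t.1) - r t w)) ≤ 2*η*(G*Db*Real.sqrt T) := by
    rw [← key]; linarith
  exact le_of_mul_le_mul_left hfin (by positivity)
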